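/- Fix a model M = (a,b,c) ∈ ℝ³, γ > 0, and P > 0 solving the Riccati equation P = (a²/(P + γ²c² − 1) + γ⁻²)⁻¹ with P + γ²c² − 1 > 0. Fix t ≥ 0, sequences u(0),…,u(t) and y(0),…,y(t) in ℝ, and ξ ∈ ℝ. Then the supremum, over all disturbance sequences w(0),…,w(t) ∈ ℝ and initial states x(0) ∈ ℝ such that the trajectory x(τ+1) = a·x(τ) + b·u(τ) + w(τ) satisfies x(t+1) = ξ, of Σ_{τ=0}^{t} x(τ)² − γ² Σ_{τ=0}^{t} ( w(τ)² + v(τ)² ) − P·x(0)², where v(τ) = y(τ) − c·x(τ), equals −P·(ξ − x̂(t+1))² + l(t+1), where x̂ and l are defined by x̂(t+1) = â·x̂(t) + b·u(t) + ĝ·y(t), x̂(0) = 0, and l(t+1) = l(t) − P·x̂(t)² − γ²·y(t)² + (P·x̂(t) + γ²·c·y(t))²/(P + γ²c² − 1), l(0) = 0, with â = a·P/(P + γ²c² − 1) and ĝ = γ²·a·c/(P + γ²c² − 1). -/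

import Mathlib

set_option maxHeartbeats 1000000 in
private lemma core_ident (γ a P X D Q : ℝ) (hX : X ≠ 0) (hA : X + γ^2*a^2 ≠ 0)
    (hPA : P * (X + γ^2*a^2) = γ^2 * X) :
    -γ^2*D^2 + (Q + γ^2*a*D)^2/(X + γ^2*a^2) = Q^2/X - P*(D - a*Q/X)^2 := by
  field_simp
  linear_combination (D*X - a*Q)^2 * hPA

set_option maxHeartbeats 1000000 in
theorem past_cost
    (a b c γ P : ℝ) (hγ : 0 < γ) (hP : 0 < P)
    (hX : 0 < P + γ ^ 2 * c ^ 2 - 1)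
    (hRic : P = (a ^ 2 / (P + γ ^ 2 * c ^ 2 - 1) + (γ ^ 2)⁻¹)⁻¹)
    (u y : ℕ → ℝ) (t : ℕ) (ξ : ℝ)
    (xhat l : ℕ → ℝ)
    (hxhat0 : xhat 0 = 0) (hl0 : l 0 = 0)
    (hxhat : ∀ s, xhat (s + 1) =
      (a * P / (P + γ ^ 2 * c ^ 2 - 1)) * xhat s + b * u s
        + (γ ^ 2 * a * c / (P + γ ^ 2 * c ^ 2 - 1)) * y s)
    (hl : ∀ s, l (s + 1) = l s - P * (xhat s) ^ 2 - γ ^ 2 * (y s) ^ 2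
        + (P * xhat s + γ ^ 2 * c * y s) ^ 2 / (P + γ ^ 2 * c ^ 2 - 1)) :
    IsLUB { S : ℝ | ∃ (w x : ℕ → ℝ),
        (∀ τ, x (τ + 1) = a * x τ + b * u τ + w τ) ∧
        x (t + 1) = ξ ∧
        S = ∑ τ ∈ Finset.range (t + 1), (x τ) ^ 2
          - γ ^ 2 * ∑ τ ∈ Finset.range (t + 1), ((w τ) ^ 2 + (y τ - c * x τ) ^ 2)
          - P * (x 0) ^ 2 }
      (-P * (ξ - xhat (t + 1)) ^ 2 + l (t + 1)) := by
  have hXne : P + γ ^ 2 * c ^ 2 - 1 ≠ 0 := ne_of_gt hX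
  have hApos : 0 < (P + γ ^ 2 * c ^ 2 - 1) + γ ^ 2 * a ^ 2 := by positivity
  have hAne : (P + γ ^ 2 * c ^ 2 - 1) + γ ^ 2 * a ^ 2 ≠ 0 := ne_of_gt hApos
  have hPA : P * ((P + γ ^ 2 * c ^ 2 - 1) + γ ^ 2 * a ^ 2)
      = γ ^ 2 * (P + γ ^ 2 * c ^ 2 - 1) := by
    have hne : a ^ 2 / (P + γ ^ 2 * c ^ 2 - 1) + (γ ^ 2)⁻¹ ≠ 0 := by
      intro h
      rw [h, inv_zero] at hRic
      exact absurd hRic (ne_of_gt hP)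
    have h1 := inv_mul_cancel₀ hne
    rw [← hRic] at h1
    have hγ2 : (γ:ℝ) ^ 2 ≠ 0 := by positivity
    field_simp at h1
    linarith [h1]
  suffices h : ∀ s : ℕ, ∀ ξ : ℝ, IsGreatest { S : ℝ | ∃ (w x : ℕ → ℝ),
      (∀ τ, x (τ + 1) = a * x τ + b * u τ + w τ) ∧
      x s = ξ ∧
      S = ∑ τ ∈ Finset.range s, (x τ) ^ 2
        - γ ^ 2 * ∑ τ ∈ Finset.range s, ((w τ) ^ 2 + (y τ - c * x τ) ^ 2)
        - P * (x 0) ^ 2 }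
      (-P * (ξ - xhat s) ^ 2 + l s) by
    exact (h (t + 1) ξ).isLUB
  intro s
  induction s with
  | zero =>
    intro ξ
    constructor
    · refine ⟨fun τ => ξ - a * ξ - b * u τ, fun _ => ξ, fun τ => by ring, rfl, ?_⟩
      simp only [Finset.range_zero, Finset.sum_empty, hxhat0, hl0]
      ring
    · rintro S ⟨w, x, hw, hx0, rfl⟩
      simp only [Finset.range_zero, Finset.sum_empty, hxhat0, hl0, hx0]
      exact le_of_eq (by ring)
  | succ s ih =>
    intro ξ
    -- abbreviations (written out literally)
    have hcore := core_ident γ a P (P + γ ^ 2 * c ^ 2 - 1) (ξ - b * u s)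
      (P * xhat s + γ ^ 2 * c * y s) hXne hAne hPA
    -- the maximizing point
    have hzs1 : ((P + γ ^ 2 * c ^ 2 - 1) + γ ^ 2 * a ^ 2) *
        (((P * xhat s + γ ^ 2 * c * y s) + γ ^ 2 * a * (ξ - b * u s)) /
          ((P + γ ^ 2 * c ^ 2 - 1) + γ ^ 2 * a ^ 2))
        = (P * xhat s + γ ^ 2 * c * y s) + γ ^ 2 * a * (ξ - b * u s) := by
      field_simp
    have hzs2 : ((P + γ ^ 2 * c ^ 2 - 1) + γ ^ 2 * a ^ 2) *
        (((P * xhat s + γ ^ 2 * c * y s) + γ ^ 2 * a * (ξ - b * u s)) /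
          ((P + γ ^ 2 * c ^ 2 - 1) + γ ^ 2 * a ^ 2)) ^ 2
        = ((P * xhat s + γ ^ 2 * c * y s) + γ ^ 2 * a * (ξ - b * u s)) ^ 2 /
          ((P + γ ^ 2 * c ^ 2 - 1) + γ ^ 2 * a ^ 2) := by
      rw [div_pow]
      field_simp
    set zs : ℝ := ((P * xhat s + γ ^ 2 * c * y s) + γ ^ 2 * a * (ξ - b * u s)) /
        ((P + γ ^ 2 * c ^ 2 - 1) + γ ^ 2 * a ^ 2) with hzsdef
    have hmax : ∀ z : ℝ,
        (-P * (z - xhat s) ^ 2 + l s)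
          + (z ^ 2 - γ ^ 2 * ((ξ - a * z - b * u s) ^ 2 + (y s - c * z) ^ 2))
        = (-P * (ξ - xhat (s + 1)) ^ 2 + l (s + 1))
          - ((P + γ ^ 2 * c ^ 2 - 1) + γ ^ 2 * a ^ 2) * (z - zs) ^ 2 := by
      intro z
      rw [hxhat s, hl s]
      linear_combination hcore - (2 * z) * hzs1 + hzs2
    constructor
    · -- membership: build the optimal trajectory
      obtain ⟨w0, x0, hw0, hx0s, hM⟩ := (ih zs).1
      refine ⟨fun τ => (if τ + 1 ≤ s then x0 (τ + 1) else ξ)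
          - a * (if τ ≤ s then x0 τ else ξ) - b * u τ,
        fun n => if n ≤ s then x0 n else ξ, fun τ => by ring, ?_, ?_⟩
      · simp only []
        rw [if_neg (by omega)]
      · have e2 : (if s ≤ s then x0 s else ξ) = zs := by rw [if_pos le_rfl, hx0s]
        have e0 : (if (0:ℕ) ≤ s then x0 0 else ξ) = x0 0 := if_pos (Nat.zero_le s)
        have hxeq : ∀ τ ∈ Finset.range s,
            ((if τ ≤ s then x0 τ else ξ) : ℝ) ^ 2 = (x0 τ) ^ 2 := by
          intro τ hτ
          rw [if_pos (le_of_lt (Finset.mem_range.mp hτ))]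
        have hweq : ∀ τ ∈ Finset.range s,
            ((if τ + 1 ≤ s then x0 (τ + 1) else ξ)
              - a * (if τ ≤ s then x0 τ else ξ) - b * u τ) ^ 2
              + (y τ - c * (if τ ≤ s then x0 τ else ξ)) ^ 2
            = (w0 τ) ^ 2 + (y τ - c * x0 τ) ^ 2 := by
          intro τ hτ
          have hτs := Finset.mem_range.mp hτ
          rw [if_pos (Nat.succ_le_of_lt hτs), if_pos (le_of_lt hτs)]
          have := hw0 τ
          have hw0τ : x0 (τ + 1) - a * x0 τ - b * u τ = w0 τ := by linarith
          rw [hw0τ]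
        rw [Finset.sum_range_succ, Finset.sum_range_succ,
          Finset.sum_congr rfl hxeq, Finset.sum_congr rfl hweq]
        simp only []
        rw [if_neg (show ¬ s + 1 ≤ s by omega), e2, e0]
        linear_combination hM - hmax zs
    · -- upper bound
      rintro S ⟨w, x, hw, hxs1, rfl⟩
      have hws : w s = ξ - a * x s - b * u s := by
        have := hw s
        rw [hxs1] at this
        linarith
      have hmem : (∑ τ ∈ Finset.range s, (x τ) ^ 2
          - γ ^ 2 * ∑ τ ∈ Finset.range s, ((w τ) ^ 2 + (y τ - c * x τ) ^ 2)
          - P * (x 0) ^ 2) ∈ { S : ℝ | ∃ (w' x' : ℕ → ℝ),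
            (∀ τ, x' (τ + 1) = a * x' τ + b * u τ + w' τ) ∧
            x' s = x s ∧
            S = ∑ τ ∈ Finset.range s, (x' τ) ^ 2
              - γ ^ 2 * ∑ τ ∈ Finset.range s, ((w' τ) ^ 2 + (y τ - c * x' τ) ^ 2)
              - P * (x' 0) ^ 2 } := ⟨w, x, hw, rfl, rfl⟩
      have hle := (ih (x s)).2 hmem
      have hS' : (∑ τ ∈ Finset.range (s + 1), (x τ) ^ 2
          - γ ^ 2 * ∑ τ ∈ Finset.range (s + 1), ((w τ) ^ 2 + (y τ - c * x τ) ^ 2)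
          - P * (x 0) ^ 2)
          = (∑ τ ∈ Finset.range s, (x τ) ^ 2
            - γ ^ 2 * ∑ τ ∈ Finset.range s, ((w τ) ^ 2 + (y τ - c * x τ) ^ 2)
            - P * (x 0) ^ 2)
            + ((x s) ^ 2 - γ ^ 2 * ((ξ - a * x s - b * u s) ^ 2 + (y s - c * x s) ^ 2)) := by
        rw [Finset.sum_range_succ, Finset.sum_range_succ, hws]
        ring
      rw [hS']
      have h2 := hmax (x s)
      have h3 : 0 ≤ ((P + γ ^ 2 * c ^ 2 - 1) + γ ^ 2 * a ^ 2) * (x s - zs) ^ 2 :=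
        mul_nonneg hApos.le (sq_nonneg _)
      linarith [hle, h2, h3]
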